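/- Let f be a quasiperiodically forced circle homeomorphism over an irrational ω with lift F, and fix ε > 0. Let A ≺ B be minimal F-invariant strips with no F-invariant strip S satisfying A ≺ S ≺ B, and let C := {(θ,x) ∈ T¹×ℝ : φ⁺_A(θ) < x < φ⁻_B(θ)}. Assume there exist a continuous curve γ : T¹ → ℝ whose graph is contained in C and an integer N ≥ 1 such that F^N_θ(γ(θ)) > γ(θ+Nω) for all θ (γ is mapped strictly above itself by the N-th iterate of F). Then for every θ₀ ∈ T¹ and every x₀ > φ⁺_A(θ₀) there exists k ∈ ℕ with (F_ε)^k_{θ₀}(x₀) > φ⁺_B(θ₀ + kω). -/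

import Mathlib

open Filter Topology MeasureTheory
open scoped ENNReal

noncomputable section

/-- The circle `T¹ = ℝ/ℤ`. -/
abbrev T1 := AddCircle (1 : ℝ)

/-- Fiberwise iterate of the skew product: `fiberIter ω F n θ x = F^n_θ(x)`. -/
def fiberIter (ω : ℝ) (F : T1 → ℝ → ℝ) : ℕ → T1 → ℝ → ℝ
  | 0, _, x => x
  | n + 1, θ, x => fiberIter ω F n (θ + (ω : T1)) (F θ x)

/-- `F` is (the fiber part of) a lift of a quasiperiodically forced circle homeomorphism
over `ω`: `F(θ,x) = (θ+ω, F_θ(x))`, each `F_θ` a strictly increasing homeomorphism of `ℝ`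
commuting with `x ↦ x+1`. -/
structure IsQpfLift (ω : ℝ) (F : T1 → ℝ → ℝ) : Prop where
  cont : Continuous fun p : T1 × ℝ => F p.1 p.2
  mono : ∀ θ, StrictMono (F θ)
  surj : ∀ θ, Function.Surjective (F θ)
  per  : ∀ θ x, F θ (x + 1) = F θ x + 1

/-- `ρ` is the fibered rotation number of the lift `F`. -/
def HasRotNum (ω : ℝ) (F : T1 → ℝ → ℝ) (ρ : ℝ) : Prop :=
  ∀ θ x, Tendsto (fun n : ℕ => (fiberIter ω F n θ x - x) / n) atTop (𝓝 ρ)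

/-- The skew-product map on `T¹ × ℝ` induced by the (fiber part of the) lift. -/
def skew (ω : ℝ) (F : T1 → ℝ → ℝ) : T1 × ℝ → T1 × ℝ :=
  fun p => (p.1 + (ω : T1), F p.1 p.2)

/-- An `F`-invariant strip: a compact invariant set all of whose fibers are nonempty
compact intervals. -/
def IsInvStrip (ω : ℝ) (F : T1 → ℝ → ℝ) (A : Set (T1 × ℝ)) : Prop :=
  IsCompact A ∧ skew ω F '' A = A ∧
    ∀ θ : T1, ∃ a b : ℝ, a ≤ b ∧ {x : ℝ | (θ, x) ∈ A} = Set.Icc a b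

/-- Upper bounding graph `φ⁺_A(θ) = sup A_θ`. -/
def phiSup (A : Set (T1 × ℝ)) (θ : T1) : ℝ := sSup {x : ℝ | (θ, x) ∈ A}

/-- Lower bounding graph `φ⁻_A(θ) = inf A_θ`. -/
def phiInf (A : Set (T1 × ℝ)) (θ : T1) : ℝ := sInf {x : ℝ | (θ, x) ∈ A}

/-- `A ≺ B`: the strip `A` lies strictly below the strip `B`. -/
def StripLt (A B : Set (T1 × ℝ)) : Prop := ∀ θ, phiSup A θ < phiInf B θ

/-- A minimal invariant strip: one not strictly containing another invariant strip. -/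
def IsMinimalStrip (ω : ℝ) (F : T1 → ℝ → ℝ) (A : Set (T1 × ℝ)) : Prop :=
  IsInvStrip ω F A ∧ ∀ S : Set (T1 × ℝ), IsInvStrip ω F S → S ⊆ A → S = A

/- ===================== Auxiliary development ===================== -/

instance fact_zero_lt_one_real : Fact ((0:ℝ) < 1) := ⟨one_pos⟩

namespace Climb

open Set

variable {ω : ℝ} {F : T1 → ℝ → ℝ}

theorem fiberIter_succ (ω : ℝ) (F : T1 → ℝ → ℝ) (n : ℕ) (θ : T1) (x : ℝ) :
    fiberIter ω F (n+1) θ x = fiberIter ω F n (θ + (ω : T1)) (F θ x) := rfl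

theorem nsmul_succ_rot (θ : T1) (n : ℕ) :
    θ + (ω : T1) + n • (ω : T1) = θ + (n+1) • (ω : T1) := by
  rw [succ_nsmul]; abel

theorem fiberIter_succ' (ω : ℝ) (F : T1 → ℝ → ℝ) :
    ∀ (n : ℕ) (θ : T1) (x : ℝ),
    fiberIter ω F (n+1) θ x = F (θ + n • (ω : T1)) (fiberIter ω F n θ x)
  | 0, θ, x => by simp [fiberIter]
  | (n+1), θ, x => by
      rw [fiberIter_succ, fiberIter_succ' _ _ n, fiberIter_succ, nsmul_succ_rot]

theorem fiberIter_strictMono (hF : IsQpfLift ω F) :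
    ∀ (n : ℕ) (θ : T1), StrictMono (fiberIter ω F n θ)
  | 0, _ => fun _ _ h => h
  | (n+1), θ => fun _ _ h =>
      fiberIter_strictMono hF n (θ + (ω : T1)) ((hF.mono θ) h)

theorem perNat (hF : IsQpfLift ω F) (θ : T1) (x : ℝ) :
    ∀ n : ℕ, F θ (x + n) = F θ x + n := by
  intro n
  induction n with
  | zero => simp
  | succ n ih =>
      have : x + (n+1 : ℕ) = (x + n) + 1 := by push_cast; ring
      rw [this, hF.per, ih]; push_cast; ring

theorem perInt (hF : IsQpfLift ω F) (θ : T1) (x : ℝ) :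
    ∀ n : ℤ, F θ (x + n) = F θ x + n := by
  have key : ∀ y : ℝ, F θ (y - 1) = F θ y - 1 := by
    intro y
    have := hF.per θ (y - 1)
    simp only [sub_add_cancel] at this
    linarith
  intro n
  induction n using Int.induction_on with
  | zero => simp
  | succ k ih =>
      push_cast at ih ⊢
      have h : x + ((k:ℝ) + 1) = (x + (k:ℝ)) + 1 := by ring
      rw [h, hF.per, ih]; ring
  | pred k ih =>
      push_cast at ih ⊢
      have h : x + (-(k:ℝ) - 1) = (x + (-(k:ℝ))) - 1 := by ring
      rw [h, key, ih]; ring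

theorem exists_disp_bound (hF : IsQpfLift ω F) :
    ∃ M : ℝ, 0 < M ∧ ∀ θ x, |F θ x - x| ≤ M := by
  have hcpt : IsCompact ((univ : Set T1) ×ˢ Icc (0:ℝ) 1) :=
    isCompact_univ.prod isCompact_Icc
  obtain ⟨C, hC⟩ := hcpt.exists_bound_of_continuousOn
    (f := fun p : T1 × ℝ => F p.1 p.2 - p.2) (hF.cont.sub continuous_snd).continuousOn
  refine ⟨max C 1, lt_of_lt_of_le one_pos (le_max_right _ _), fun θ x => ?_⟩
  have hfr : F θ x - x = F θ (Int.fract x) - Int.fract x := by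
    have hx : x = Int.fract x + (⌊x⌋ : ℤ) := (Int.fract_add_floor x).symm
    have h1 : F θ x = F θ (Int.fract x) + (⌊x⌋ : ℤ) := by
      conv_lhs => rw [hx]
      rw [perInt hF]
    have h2 : Int.fract x = x - (⌊x⌋ : ℤ) := (Int.self_sub_floor x).symm
    rw [h1, h2]
    ring
  have hmem : (θ, Int.fract x) ∈ (univ : Set T1) ×ˢ Icc (0:ℝ) 1 :=
    ⟨mem_univ _, ⟨Int.fract_nonneg x, (Int.fract_lt_one x).le⟩⟩
  have := hC (θ, Int.fract x) hmem
  rw [hfr]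
  calc |F θ (Int.fract x) - Int.fract x| ≤ C := this
  _ ≤ max C 1 := le_max_left _ _

/-- The fiber maps as order isomorphisms of `ℝ`. -/
noncomputable def fibIso (hF : IsQpfLift ω F) (θ : T1) : ℝ ≃o ℝ :=
  StrictMono.orderIsoOfSurjective (F θ) (hF.mono θ) (hF.surj θ)

theorem fibIso_apply (hF : IsQpfLift ω F) (θ : T1) (x : ℝ) :
    fibIso hF θ x = F θ x := rfl

/-- Inverse of the fiber maps. -/
noncomputable def Finv (hF : IsQpfLift ω F) (θ : T1) (y : ℝ) : ℝ :=
  (fibIso hF θ).symm y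

theorem F_Finv (hF : IsQpfLift ω F) (θ : T1) (y : ℝ) :
    F θ (Finv hF θ y) = y := by
  have := (fibIso hF θ).apply_symm_apply y
  rwa [fibIso_apply] at this

theorem Finv_F (hF : IsQpfLift ω F) (θ : T1) (x : ℝ) :
    Finv hF θ (F θ x) = x := by
  have := (fibIso hF θ).symm_apply_apply x
  rwa [← fibIso_apply hF θ x]

theorem Finv_strictMono (hF : IsQpfLift ω F) (θ : T1) :
    StrictMono (Finv hF θ) := (fibIso hF θ).symm.strictMono

attribute [irreducible] Finv

theorem finv_cont (hF : IsQpfLift ω F) :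
    Continuous fun p : T1 × ℝ => Finv hF p.1 p.2 := by
  obtain ⟨M, hM0, hM⟩ := exists_disp_bound hF
  rw [continuous_iff_seqContinuous]
  intro u p hu
  have h2 : Tendsto (fun n => (u n).2) atTop (𝓝 p.2) :=
    ((continuous_snd.tendsto p).comp hu)
  obtain ⟨Y, hY⟩ : ∃ Y : ℝ, ∀ n, |(u n).2| ≤ Y := by
    have hcpt : IsCompact (insert p (Set.range u)) := hu.isCompact_insert_range
    have h2cpt : IsCompact (Prod.snd '' insert p (Set.range u)) :=
      hcpt.image continuous_snd
    obtain ⟨Y, hY⟩ := h2cpt.exists_bound_of_continuousOn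
      (continuousOn_id (s := Prod.snd '' insert p (Set.range u)))
    exact ⟨Y, fun n => by
      simpa using hY (u n).2 ⟨u n, Or.inr ⟨n, rfl⟩, rfl⟩⟩
  set xs := fun n => Finv hF (u n).1 (u n).2 with hxs
  have hxsb : ∀ n, xs n ∈ Icc (-(Y + M)) (Y + M) := by
    intro n
    have hb := hM (u n).1 (xs n)
    have hfx : F (u n).1 (xs n) = (u n).2 := F_Finv hF _ _
    rw [hfx] at hb
    have h1 := abs_le.1 hb
    have h2 := abs_le.1 (hY n)
    rw [mem_Icc]
    constructor <;> linarith [h1.1, h1.2, h2.1, h2.2]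
  apply tendsto_of_subseq_tendsto
  intro ns hns
  obtain ⟨x', _, φ, hφmono, hφlim⟩ :=
    (isCompact_Icc (a := -(Y + M)) (b := Y + M)).tendsto_subseq
      (x := fun n => xs (ns n)) (fun n => hxsb (ns n))
  refine ⟨φ, ?_⟩
  have hsub : Tendsto (fun n => u (ns (φ n))) atTop (𝓝 p) :=
    hu.comp (hns.comp hφmono.tendsto_atTop)
  have hfst : Tendsto (fun n => (u (ns (φ n))).1) atTop (𝓝 p.1) :=
    (continuous_fst.tendsto p).comp hsub
  have hpair : Tendsto (fun n => ((u (ns (φ n))).1, xs (ns (φ n)))) atTop (𝓝 (p.1, x')) :=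
    hfst.prodMk_nhds (by simpa [Function.comp_def] using hφlim)
  have hval : Tendsto (fun n => F (u (ns (φ n))).1 (xs (ns (φ n)))) atTop (𝓝 (F p.1 x')) :=
    (hF.cont.tendsto (p.1, x')).comp hpair
  have hval2 : Tendsto (fun n => F (u (ns (φ n))).1 (xs (ns (φ n)))) atTop (𝓝 p.2) := by
    have heq : (fun n => F (u (ns (φ n))).1 (xs (ns (φ n)))) = fun n => (u (ns (φ n))).2 := by
      funext n; exact F_Finv hF _ _
    rw [heq]
    exact (continuous_snd.tendsto p).comp hsub
  have hFx : F p.1 x' = p.2 := tendsto_nhds_unique hval hval2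
  have heq2 : x' = Finv hF p.1 p.2 := by
    have h := Finv_F hF p.1 x'
    rw [hFx] at h
    exact h.symm
  have hgoal : Tendsto (fun n => xs (ns (φ n))) atTop (𝓝 x') := by
    simpa [Function.comp_def] using hφlim
  show Tendsto (fun n => Finv hF (u (ns (φ n))).1 (u (ns (φ n))).2) atTop
    (𝓝 (Finv hF p.1 p.2))
  rw [← heq2]
  exact hgoal

/-- The skew product as an equivalence. -/
noncomputable def skewEquiv (hF : IsQpfLift ω F) : T1 × ℝ ≃ T1 × ℝ where
  toFun := skew ω F
  invFun := fun p => (p.1 - (ω : T1), Finv hF (p.1 - (ω : T1)) p.2)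
  left_inv := by
    intro p
    simp only [skew, add_sub_cancel_right]
    rw [Finv_F hF]
  right_inv := by
    intro p
    simp only [skew]
    rw [F_Finv hF, sub_add_cancel]

theorem skewEquiv_coe (hF : IsQpfLift ω F) : ⇑(skewEquiv hF) = skew ω F := rfl

theorem skewEquiv_symm_coe (hF : IsQpfLift ω F) :
    ⇑(skewEquiv hF).symm = fun p : T1 × ℝ => (p.1 - (ω : T1), Finv hF (p.1 - (ω : T1)) p.2) :=
  rfl

/-- The skew product as a homeomorphism. -/
noncomputable def skewHomeo (hF : IsQpfLift ω F) : T1 × ℝ ≃ₜ T1 × ℝ where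
  toEquiv := skewEquiv hF
  continuous_toFun := by
    rw [Equiv.toFun_as_coe, skewEquiv_coe]
    exact (continuous_fst.add continuous_const).prodMk hF.cont
  continuous_invFun := by
    rw [Equiv.invFun_as_coe, skewEquiv_symm_coe]
    exact (continuous_fst.sub continuous_const).prodMk
      ((finv_cont hF).comp ((continuous_fst.sub continuous_const).prodMk continuous_snd))

theorem skewHomeo_coe (hF : IsQpfLift ω F) : ⇑(skewHomeo hF) = skew ω F := rfl

/- ===================== Density of irrational rotations ===================== -/

theorem dense_zsmul (hω : Irrational ω) :
    Dense {θ : T1 | ∃ k : ℤ, k • (ω : T1) = θ} := by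
  have hd : Dense ((AddSubgroup.closure {(1:ℝ), ω} : AddSubgroup ℝ) : Set ℝ) := by
    rcases AddSubgroup.dense_or_cyclic (AddSubgroup.closure {(1:ℝ), ω}) with h | ⟨a, ha⟩
    · exact h
    · exfalso
      have h1 : (1:ℝ) ∈ AddSubgroup.closure {(1:ℝ), ω} :=
        AddSubgroup.subset_closure (by simp)
      have h2 : ω ∈ AddSubgroup.closure {(1:ℝ), ω} :=
        AddSubgroup.subset_closure (by simp)
      rw [ha, AddSubgroup.mem_closure_singleton] at h1 h2
      obtain ⟨n, hn⟩ := h1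
      obtain ⟨m, hm⟩ := h2
      have hn0 : (n : ℝ) ≠ 0 := by
        intro h
        rw [zsmul_eq_mul, h, zero_mul] at hn
        exact one_ne_zero hn.symm
      refine hω ⟨(m : ℚ) / (n : ℚ), ?_⟩
      rw [zsmul_eq_mul] at hn hm
      push_cast
      rw [div_eq_iff (by exact_mod_cast hn0)]
      calc (m:ℝ) = (m:ℝ) * ((n:ℝ) * a) := by rw [hn, mul_one]
      _ = ω * (n:ℝ) := by rw [← hm]; ring
  have hsurj : Function.Surjective ((↑) : ℝ → T1) :=
    QuotientAddGroup.mk_surjective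
  have hcont : Continuous ((↑) : ℝ → T1) := AddCircle.continuous_mk' 1
  have himg : Dense (((↑) : ℝ → T1) ''
      ((AddSubgroup.closure {(1:ℝ), ω} : AddSubgroup ℝ) : Set ℝ)) :=
    hsurj.denseRange.dense_image hcont hd
  refine himg.mono ?_
  rintro _ ⟨x, hx, rfl⟩
  rw [SetLike.mem_coe, AddSubgroup.mem_closure_pair] at hx
  obtain ⟨m, n, hmn⟩ := hx
  refine ⟨n, ?_⟩
  have h1 : ((m • (1:ℝ) : ℝ) : T1) = 0 := by
    rw [AddCircle.coe_eq_zero_iff]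
    exact ⟨m, rfl⟩
  rw [← hmn, AddCircle.coe_add, h1, zero_add, AddCircle.coe_zsmul]

theorem dense_orbit (hω : Irrational ω) (θb : T1) :
    Dense {θ : T1 | ∃ k : ℤ, θb + k • (ω : T1) = θ} := by
  have h := dense_zsmul hω
  have hh : Function.Surjective (fun θ : T1 => θb + θ) := (Equiv.addLeft θb).surjective
  have himg := hh.denseRange.dense_image (continuous_const.add continuous_id) h
  refine himg.mono ?_
  rintro _ ⟨θ, ⟨k, rfl⟩, rfl⟩
  exact ⟨k, rfl⟩

theorem closed_inv_univ (hω : Irrational ω) {P : Set T1} (hcl : IsClosed P)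
    (hne : P.Nonempty) (hfwd : ∀ θ ∈ P, θ + (ω : T1) ∈ P)
    (hbwd : ∀ θ ∈ P, θ - (ω : T1) ∈ P) : P = univ := by
  obtain ⟨θb, hθb⟩ := hne
  have horb : ∀ k : ℤ, θb + k • (ω : T1) ∈ P := by
    intro k
    induction k using Int.induction_on with
    | zero => simpa using hθb
    | succ k ih =>
        have h := hfwd _ ih
        have harr : θb + (k:ℤ) • (ω:T1) + (ω:T1) = θb + ((k:ℤ)+1) • (ω:T1) := by
          rw [add_smul, one_smul]; abel
        rwa [harr] at h
    | pred k ih =>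
        have h := hbwd _ ih
        have harr : θb + (-(k:ℤ)) • (ω:T1) - (ω:T1) = θb + (-(k:ℤ)-1) • (ω:T1) := by
          rw [sub_smul, one_smul]; abel
        rwa [harr] at h
  have hd := dense_orbit hω θb
  have hsub : {θ : T1 | ∃ k : ℤ, θb + k • (ω : T1) = θ} ⊆ P := by
    rintro _ ⟨k, rfl⟩; exact horb k
  have hPd : Dense P := hd.mono hsub
  rw [← hcl.closure_eq, hPd.closure_eq]

theorem forward_orbit_dense (hω : Irrational ω) (θb : T1) :
    Dense {θ : T1 | ∃ k : ℕ, 1 ≤ k ∧ θb + k • (ω : T1) = θ} := by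
  set O := {θ : T1 | ∃ k : ℕ, 1 ≤ k ∧ θb + k • (ω : T1) = θ} with hO
  set P : ℕ → Set T1 := fun n => (fun θ => θ + n • (ω : T1)) '' closure O with hP
  have hshift : ∀ n : ℕ, ∀ S : Set T1,
      (fun θ => θ + (ω : T1)) '' ((fun θ => θ + n • (ω : T1)) '' S)
        = (fun θ => θ + (n+1) • (ω : T1)) '' S := by
    intro n S
    rw [Set.image_image]
    apply Set.image_congr'
    intro θ
    rw [succ_nsmul, add_assoc]
  have hstep : ∀ n, P (n+1) = (fun θ => θ + (ω : T1)) '' P n := by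
    intro n
    rw [hP]
    simp only
    rw [hshift]
  have hP0 : P 0 = closure O := by
    rw [hP]; simp
  have hOfwd : (fun θ => θ + (ω : T1)) '' O ⊆ O := by
    rintro _ ⟨θ, ⟨k, hk1, rfl⟩, rfl⟩
    refine ⟨k+1, by omega, ?_⟩
    show θb + (k+1) • (ω:T1) = (θb + k • (ω:T1)) + (ω:T1)
    rw [succ_nsmul, ← add_assoc]
  have hP1 : P 1 ⊆ P 0 := by
    rw [hP0, hstep 0, hP0]
    calc (fun θ => θ + (ω : T1)) '' closure O
        ⊆ closure ((fun θ => θ + (ω : T1)) '' O) :=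
          image_closure_subset_closure_image (continuous_id.add continuous_const)
    _ ⊆ closure O := closure_mono hOfwd
  have hdec : ∀ n, P (n+1) ⊆ P n := by
    intro n
    induction n with
    | zero => exact hP1
    | succ n ih =>
        rw [hstep (n+1)]
        exact (Set.image_mono ih).trans (hstep n).symm.subset
  have hPcl : ∀ n, IsClosed (P n) := by
    intro n
    exact (Homeomorph.addRight (n • (ω:T1))).isClosedMap _ isClosed_closure
  have hPcpt : ∀ n, IsCompact (P n) := fun n => (hPcl n).isCompact
  have hPne : ∀ n, (P n).Nonempty := by
    intro n
    exact ⟨_, ⟨θb + 1 • (ω:T1), subset_closure ⟨1, le_refl 1, rfl⟩, rfl⟩⟩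
  have hQne : (⋂ n, P n).Nonempty :=
    IsCompact.nonempty_iInter_of_sequence_nonempty_isCompact_isClosed P hdec hPne
      (hPcpt 0) hPcl
  have hQcl : IsClosed (⋂ n, P n) := isClosed_iInter hPcl
  have hQfwd : ∀ θ ∈ ⋂ n, P n, θ + (ω : T1) ∈ ⋂ n, P n := by
    intro θ hθ
    rw [Set.mem_iInter] at hθ ⊢
    intro n
    apply hdec n
    rw [hstep n]
    exact ⟨θ, hθ n, rfl⟩
  have hQbwd : ∀ θ ∈ ⋂ n, P n, θ - (ω : T1) ∈ ⋂ n, P n := by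
    intro θ hθ
    rw [Set.mem_iInter] at hθ ⊢
    intro n
    have h := hθ (n+1)
    rw [hstep n] at h
    obtain ⟨y, hy, hyeq⟩ := h
    have : θ - (ω : T1) = y := by
      rw [← hyeq]; exact add_sub_cancel_right y _
    rwa [this]
  have hQuniv := closed_inv_univ hω hQcl hQne hQfwd hQbwd
  have : closure O = univ := by
    apply eq_univ_of_univ_subset
    rw [← hQuniv, ← hP0]
    exact Set.iInter_subset P 0
  rwa [dense_iff_closure_eq]

theorem forward_hit (hω : Irrational ω) (θb : T1) {V : Set T1} (hV : IsOpen V)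
    (hne : V.Nonempty) (k₀ : ℕ) : ∃ k : ℕ, k₀ ≤ k ∧ θb + k • (ω : T1) ∈ V := by
  have hd := forward_orbit_dense hω (θb + k₀ • (ω : T1))
  obtain ⟨θ, hθV, hθO⟩ := hd.inter_open_nonempty V hV hne
  obtain ⟨k, _, rfl⟩ := hθO
  refine ⟨k₀ + k, Nat.le_add_right _ _, ?_⟩
  rwa [add_nsmul, ← add_assoc]

/- ===================== Fibers of compact invariant sets ===================== -/

/-- The fiber of a subset of `T1 × ℝ` over `θ`. -/
def fib (K : Set (T1 × ℝ)) (θ : T1) : Set ℝ := {x | (θ, x) ∈ K}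

variable {H : T1 → ℝ → ℝ} {K A : Set (T1 × ℝ)}

theorem fib_closed (hK : IsCompact K) (θ : T1) : IsClosed (fib K θ) :=
  hK.isClosed.preimage (Continuous.prodMk_right θ)

theorem fib_cpt (hK : IsCompact K) (θ : T1) : IsCompact (fib K θ) :=
  (hK.image continuous_snd).of_isClosed_subset (fib_closed hK θ)
    (fun x hx => ⟨(θ, x), hx, rfl⟩)

theorem fib_image (hinv : skew ω H '' K = K) (θ : T1) :
    H θ '' fib K θ = fib K (θ + (ω : T1)) := by
  ext y
  constructor
  · rintro ⟨x, hx, rfl⟩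
    show skew ω H (θ, x) ∈ K
    rw [← hinv]
    exact Set.mem_image_of_mem _ hx
  · intro hy
    have hmem : ((θ + (ω:T1), y) : T1 × ℝ) ∈ skew ω H '' K := by rw [hinv]; exact hy
    obtain ⟨⟨θ', x⟩, hm, heq⟩ := hmem
    have h1 : θ' + (ω:T1) = θ + (ω:T1) := congrArg Prod.fst heq
    have hθ : θ' = θ := add_right_cancel h1
    subst hθ
    exact ⟨x, hm, congrArg Prod.snd heq⟩

theorem fib_nonempty (hω : Irrational ω) (hK : IsCompact K) (hne : K.Nonempty)
    (hinv : skew ω H '' K = K) (θ : T1) : (fib K θ).Nonempty := by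
  set Pr := Prod.fst '' K with hPr
  have hPrcl : IsClosed Pr := (hK.image continuous_fst).isClosed
  have hPrne : Pr.Nonempty := hne.image _
  have hfwd : ∀ θ' ∈ Pr, θ' + (ω:T1) ∈ Pr := by
    rintro _ ⟨⟨θ', x⟩, hmem, rfl⟩
    have hsk : skew ω H (θ', x) ∈ K := by rw [← hinv]; exact Set.mem_image_of_mem _ hmem
    exact ⟨skew ω H (θ', x), hsk, rfl⟩
  have hbwd : ∀ θ' ∈ Pr, θ' - (ω:T1) ∈ Pr := by
    rintro _ ⟨⟨θ', x⟩, hmem, rfl⟩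
    have hmem' : ((θ', x) : T1 × ℝ) ∈ skew ω H '' K := by rw [hinv]; exact hmem
    obtain ⟨⟨θ'', x'⟩, hm, heq⟩ := hmem'
    have h1 : θ'' + (ω:T1) = θ' := congrArg Prod.fst heq
    refine ⟨(θ'', x'), hm, ?_⟩
    show θ'' = (θ', x).1 - (ω:T1)
    rw [← h1]
    simp
  have huniv := closed_inv_univ hω hPrcl hPrne hfwd hbwd
  have hθ : θ ∈ Pr := huniv ▸ mem_univ θ
  obtain ⟨⟨θ', x⟩, hmem, heq⟩ := hθ
  have : θ' = θ := heq
  subst this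
  exact ⟨x, hmem⟩

theorem fibSup_mem (hK : IsCompact K) {θ : T1} (hfib : (fib K θ).Nonempty) :
    sSup (fib K θ) ∈ fib K θ :=
  (fib_cpt hK θ).sSup_mem hfib

theorem fibInf_mem (hK : IsCompact K) {θ : T1} (hfib : (fib K θ).Nonempty) :
    sInf (fib K θ) ∈ fib K θ :=
  (fib_cpt hK θ).sInf_mem hfib

theorem fibSup_isGreatest (hK : IsCompact K) {θ : T1} (hfib : (fib K θ).Nonempty) :
    IsGreatest (fib K θ) (sSup (fib K θ)) :=
  ⟨fibSup_mem hK hfib, fun _ hx => le_csSup (fib_cpt hK θ).bddAbove hx⟩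

theorem fibInf_isLeast (hK : IsCompact K) {θ : T1} (hfib : (fib K θ).Nonempty) :
    IsLeast (fib K θ) (sInf (fib K θ)) :=
  ⟨fibInf_mem hK hfib, fun _ hx => csInf_le (fib_cpt hK θ).bddBelow hx⟩

theorem fibSup_equiv (hH : IsQpfLift ω H) (hK : IsCompact K)
    (hinv : skew ω H '' K = K) {θ : T1} (hfib : (fib K θ).Nonempty) :
    H θ (sSup (fib K θ)) = sSup (fib K (θ + (ω:T1))) := by
  have hg : IsGreatest (fib K (θ + (ω:T1))) (H θ (sSup (fib K θ))) := by
    constructor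
    · rw [← fib_image hinv]
      exact Set.mem_image_of_mem _ (fibSup_mem hK hfib)
    · rintro y hy
      rw [← fib_image hinv] at hy
      obtain ⟨x, hx, rfl⟩ := hy
      exact (hH.mono θ).monotone (le_csSup (fib_cpt hK θ).bddAbove hx)
  exact hg.csSup_eq.symm

theorem fibInf_equiv (hH : IsQpfLift ω H) (hK : IsCompact K)
    (hinv : skew ω H '' K = K) {θ : T1} (hfib : (fib K θ).Nonempty) :
    H θ (sInf (fib K θ)) = sInf (fib K (θ + (ω:T1))) := by
  have hg : IsLeast (fib K (θ + (ω:T1))) (H θ (sInf (fib K θ))) := by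
    constructor
    · rw [← fib_image hinv]
      exact Set.mem_image_of_mem _ (fibInf_mem hK hfib)
    · rintro y hy
      rw [← fib_image hinv] at hy
      obtain ⟨x, hx, rfl⟩ := hy
      exact (hH.mono θ).monotone (csInf_le (fib_cpt hK θ).bddBelow hx)
  exact hg.csInf_eq.symm

/- ===================== Invariant strips ===================== -/

theorem strip_fib_eq (hS : IsInvStrip ω H A) (θ : T1) :
    fib A θ = Icc (phiInf A θ) (phiSup A θ) := by
  obtain ⟨a, b, hab, hfib⟩ := hS.2.2 θ
  have hfib' : fib A θ = Icc a b := hfib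
  have h1 : phiInf A θ = a := by
    show sInf {x : ℝ | (θ, x) ∈ A} = a
    rw [show {x : ℝ | (θ, x) ∈ A} = Icc a b from hfib, csInf_Icc hab]
  have h2 : phiSup A θ = b := by
    show sSup {x : ℝ | (θ, x) ∈ A} = b
    rw [show {x : ℝ | (θ, x) ∈ A} = Icc a b from hfib, csSup_Icc hab]
  rw [hfib', h1, h2]

theorem strip_fib_nonempty (hS : IsInvStrip ω H A) (θ : T1) : (fib A θ).Nonempty := by
  obtain ⟨a, b, hab, hfib⟩ := hS.2.2 θ
  exact ⟨a, by show a ∈ fib A θ; rw [show fib A θ = Icc a b from hfib]; exact ⟨le_refl a, hab⟩⟩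

theorem phiInf_le_phiSup (hS : IsInvStrip ω H A) (θ : T1) :
    phiInf A θ ≤ phiSup A θ := by
  have h := strip_fib_eq hS θ
  obtain ⟨x, hx⟩ := strip_fib_nonempty hS θ
  rw [h] at hx
  exact le_trans hx.1 hx.2

theorem mem_strip_iff (hS : IsInvStrip ω H A) {θ : T1} {x : ℝ} :
    (θ, x) ∈ A ↔ phiInf A θ ≤ x ∧ x ≤ phiSup A θ := by
  have h : ((θ, x) ∈ A) ↔ x ∈ fib A θ := Iff.rfl
  rw [h, strip_fib_eq hS θ, mem_Icc]

theorem phiSup_mem (hS : IsInvStrip ω H A) (θ : T1) : (θ, phiSup A θ) ∈ A :=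
  (mem_strip_iff hS).2 ⟨phiInf_le_phiSup hS θ, le_refl _⟩

theorem phiInf_mem (hS : IsInvStrip ω H A) (θ : T1) : (θ, phiInf A θ) ∈ A :=
  (mem_strip_iff hS).2 ⟨le_refl _, phiInf_le_phiSup hS θ⟩

theorem phiSup_equiv (hH : IsQpfLift ω H) (hS : IsInvStrip ω H A) (θ : T1) :
    H θ (phiSup A θ) = phiSup A (θ + (ω:T1)) :=
  fibSup_equiv hH hS.1 hS.2.1 (strip_fib_nonempty hS θ)

theorem phiInf_equiv (hH : IsQpfLift ω H) (hS : IsInvStrip ω H A) (θ : T1) :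
    H θ (phiInf A θ) = phiInf A (θ + (ω:T1)) :=
  fibInf_equiv hH hS.1 hS.2.1 (strip_fib_nonempty hS θ)

theorem cpt_bound (hK : IsCompact K) : ∃ R : ℝ, 0 < R ∧ ∀ p ∈ K, |p.2| ≤ R := by
  have h2cpt : IsCompact (Prod.snd '' K) := hK.image continuous_snd
  obtain ⟨R, hR⟩ := h2cpt.exists_bound_of_continuousOn
    (continuousOn_id (s := Prod.snd '' K))
  refine ⟨max R 1, lt_of_lt_of_le one_pos (le_max_right _ _), fun p hp => ?_⟩
  have := hR p.2 ⟨p, hp, rfl⟩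
  simp only [id] at this
  calc |p.2| ≤ R := this
  _ ≤ max R 1 := le_max_left _ _

/- ===================== Closed regions bounded by fiber graphs ===================== -/

theorem region_le_closed (hK : IsCompact K) (hfib : ∀ θ, (fib K θ).Nonempty) :
    IsClosed {p : T1 × ℝ | p.2 ≤ sSup (fib K p.1)} := by
  apply IsSeqClosed.isClosed
  intro u p hu hup
  set s := fun n => sSup (fib K (u n).1) with hs
  have hmem : ∀ n, ((u n).1, s n) ∈ K := fun n => fibSup_mem hK (hfib _)
  obtain ⟨q, hqK, φ, hφ, hqlim⟩ := hK.tendsto_subseq hmem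
  have hfst : Tendsto (fun n => (u (φ n)).1) atTop (𝓝 p.1) :=
    (continuous_fst.tendsto p).comp (hup.comp hφ.tendsto_atTop)
  have hq1 : q.1 = p.1 :=
    tendsto_nhds_unique ((continuous_fst.tendsto q).comp hqlim) hfst
  have h2 : Tendsto (fun n => (u (φ n)).2) atTop (𝓝 p.2) :=
    (continuous_snd.tendsto p).comp (hup.comp hφ.tendsto_atTop)
  have h3 : Tendsto (fun n => s (φ n)) atTop (𝓝 q.2) :=
    (continuous_snd.tendsto q).comp hqlim
  have hle : p.2 ≤ q.2 :=
    le_of_tendsto_of_tendsto' h2 h3 (fun n => hu (φ n))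
  show p.2 ≤ sSup (fib K p.1)
  calc p.2 ≤ q.2 := hle
  _ ≤ sSup (fib K p.1) := by
      apply le_csSup (fib_cpt hK p.1).bddAbove
      show (p.1, q.2) ∈ K
      rw [← hq1]
      exact hqK

theorem region_ge_closed (hK : IsCompact K) (hfib : ∀ θ, (fib K θ).Nonempty) :
    IsClosed {p : T1 × ℝ | sInf (fib K p.1) ≤ p.2} := by
  apply IsSeqClosed.isClosed
  intro u p hu hup
  set s := fun n => sInf (fib K (u n).1) with hs
  have hmem : ∀ n, ((u n).1, s n) ∈ K := fun n => fibInf_mem hK (hfib _)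
  obtain ⟨q, hqK, φ, hφ, hqlim⟩ := hK.tendsto_subseq hmem
  have hfst : Tendsto (fun n => (u (φ n)).1) atTop (𝓝 p.1) :=
    (continuous_fst.tendsto p).comp (hup.comp hφ.tendsto_atTop)
  have hq1 : q.1 = p.1 :=
    tendsto_nhds_unique ((continuous_fst.tendsto q).comp hqlim) hfst
  have h2 : Tendsto (fun n => (u (φ n)).2) atTop (𝓝 p.2) :=
    (continuous_snd.tendsto p).comp (hup.comp hφ.tendsto_atTop)
  have h3 : Tendsto (fun n => s (φ n)) atTop (𝓝 q.2) :=
    (continuous_snd.tendsto q).comp hqlim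
  have hle : q.2 ≤ p.2 :=
    le_of_tendsto_of_tendsto' h3 h2 (fun n => hu (φ n))
  show sInf (fib K p.1) ≤ p.2
  refine le_trans ?_ hle
  apply csInf_le (fib_cpt hK p.1).bddBelow
  show (p.1, q.2) ∈ K
  rw [← hq1]
  exact hqK

/- ===================== The fiberwise convex hull ===================== -/

/-- Fiberwise convex hull of a set. -/
def hull (K : Set (T1 × ℝ)) : Set (T1 × ℝ) :=
  {p | sInf (fib K p.1) ≤ p.2 ∧ p.2 ≤ sSup (fib K p.1)}

theorem hull_fib (K : Set (T1 × ℝ)) (θ : T1) :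
    fib (hull K) θ = Icc (sInf (fib K θ)) (sSup (fib K θ)) := rfl

theorem hull_closed (hK : IsCompact K) (hfib : ∀ θ, (fib K θ).Nonempty) :
    IsClosed (hull K) := by
  have : hull K = {p : T1 × ℝ | sInf (fib K p.1) ≤ p.2} ∩
      {p : T1 × ℝ | p.2 ≤ sSup (fib K p.1)} := rfl
  rw [this]
  exact (region_ge_closed hK hfib).inter (region_le_closed hK hfib)

theorem hull_cpt (hK : IsCompact K) (hfib : ∀ θ, (fib K θ).Nonempty) :
    IsCompact (hull K) := by
  obtain ⟨R, hR0, hR⟩ := cpt_bound hK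
  apply (isCompact_univ.prod (isCompact_Icc (a := -R) (b := R))).of_isClosed_subset
    (hull_closed hK hfib)
  rintro ⟨θ, x⟩ ⟨h1, h2⟩
  refine ⟨mem_univ _, ?_, ?_⟩
  · have hinf : -R ≤ sInf (fib K θ) := by
      apply le_csInf (hfib θ)
      intro b hb
      have hb2 := abs_le.1 (hR (θ, b) hb)
      linarith [hb2.1]
    exact le_trans hinf h1
  · have hsup : sSup (fib K θ) ≤ R := by
      apply csSup_le (hfib θ)
      intro b hb
      have hb2 := abs_le.1 (hR (θ, b) hb)
      linarith [hb2.2]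
    exact le_trans h2 hsup

theorem hull_inv (hH : IsQpfLift ω H) (hK : IsCompact K)
    (hinv : skew ω H '' K = K) (hfib : ∀ θ, (fib K θ).Nonempty) :
    skew ω H '' hull K = hull K := by
  ext p
  constructor
  · rintro ⟨⟨θ, x⟩, ⟨h1, h2⟩, rfl⟩
    constructor
    · show sInf (fib K (θ + (ω:T1))) ≤ H θ x
      rw [← fibInf_equiv hH hK hinv (hfib θ)]
      exact (hH.mono θ).monotone h1
    · show H θ x ≤ sSup (fib K (θ + (ω:T1)))
      rw [← fibSup_equiv hH hK hinv (hfib θ)]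
      exact (hH.mono θ).monotone h2
  · rintro ⟨h1, h2⟩
    refine ⟨(p.1 - (ω:T1), Finv hH (p.1 - (ω:T1)) p.2), ⟨?_, ?_⟩, ?_⟩
    · show sInf (fib K (p.1 - (ω:T1))) ≤ Finv hH (p.1 - (ω:T1)) p.2
      have he : H (p.1 - (ω:T1)) (sInf (fib K (p.1 - (ω:T1)))) = sInf (fib K p.1) := by
        rw [fibInf_equiv hH hK hinv (hfib _), sub_add_cancel]
      have hmono := (Finv_strictMono hH (p.1 - (ω:T1))).monotone h1
      rwa [← he, Finv_F hH] at hmono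
    · show Finv hH (p.1 - (ω:T1)) p.2 ≤ sSup (fib K (p.1 - (ω:T1)))
      have he : H (p.1 - (ω:T1)) (sSup (fib K (p.1 - (ω:T1)))) = sSup (fib K p.1) := by
        rw [fibSup_equiv hH hK hinv (hfib _), sub_add_cancel]
      have hmono := (Finv_strictMono hH (p.1 - (ω:T1))).monotone h2
      rwa [← he, Finv_F hH] at hmono
    · show skew ω H _ = p
      simp only [skew]
      rw [F_Finv hH, sub_add_cancel]

theorem hull_isInvStrip (hH : IsQpfLift ω H) (hK : IsCompact K)
    (hinv : skew ω H '' K = K) (hfib : ∀ θ, (fib K θ).Nonempty) :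
    IsInvStrip ω H (hull K) := by
  refine ⟨hull_cpt hK hfib, hull_inv hH hK hinv hfib, fun θ => ?_⟩
  refine ⟨sInf (fib K θ), sSup (fib K θ), ?_, hull_fib K θ⟩
  exact csInf_le_csSup (hfib θ) (fib_cpt hK θ).bddBelow (fib_cpt hK θ).bddAbove

theorem phiSup_hull (hK : IsCompact K) (hfib : ∀ θ, (fib K θ).Nonempty) (θ : T1) :
    phiSup (hull K) θ = sSup (fib K θ) := by
  show sSup {x : ℝ | (θ, x) ∈ hull K} = sSup (fib K θ)
  have : {x : ℝ | (θ, x) ∈ hull K} = Icc (sInf (fib K θ)) (sSup (fib K θ)) := rfl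
  rw [this, csSup_Icc]
  exact csInf_le_csSup (hfib θ) (fib_cpt hK θ).bddBelow (fib_cpt hK θ).bddAbove

theorem phiInf_hull (hK : IsCompact K) (hfib : ∀ θ, (fib K θ).Nonempty) (θ : T1) :
    phiInf (hull K) θ = sInf (fib K θ) := by
  show sInf {x : ℝ | (θ, x) ∈ hull K} = sInf (fib K θ)
  have : {x : ℝ | (θ, x) ∈ hull K} = Icc (sInf (fib K θ)) (sSup (fib K θ)) := rfl
  rw [this, csInf_Icc]
  exact csInf_le_csSup (hfib θ) (fib_cpt hK θ).bddBelow (fib_cpt hK θ).bddAbove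

/-- If a nonempty compact invariant set is contained in a minimal invariant strip, its
fiberwise suprema realize the upper bounding graph of the strip. -/
theorem sup_graph_mem_of_subset_minimal (hω : Irrational ω) (hH : IsQpfLift ω H)
    (hAmin : IsMinimalStrip ω H A) (hK : IsCompact K) (hne : K.Nonempty)
    (hinv : skew ω H '' K = K) (hsub : K ⊆ A) (θ : T1) :
    sSup (fib K θ) = phiSup A θ ∧ (θ, phiSup A θ) ∈ K := by
  have hfib := fun θ => fib_nonempty hω hK hne hinv θ
  have hstrip := hull_isInvStrip hH hK hinv hfib
  have hhsub : hull K ⊆ A := by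
    rintro ⟨θ', x⟩ ⟨h1, h2⟩
    rw [mem_strip_iff hAmin.1]
    constructor
    · refine le_trans ?_ h1
      apply le_csInf (hfib θ')
      intro b hb
      exact ((mem_strip_iff hAmin.1).1 (hsub hb)).1
    · refine le_trans h2 ?_
      apply csSup_le (hfib θ')
      intro b hb
      exact ((mem_strip_iff hAmin.1).1 (hsub hb)).2
  have heq := hAmin.2 (hull K) hstrip hhsub
  have h1 : phiSup A θ = sSup (fib K θ) := by
    rw [← heq, phiSup_hull hK hfib]
  refine ⟨h1.symm, ?_⟩
  rw [h1]
  exact fibSup_mem hK (hfib θ)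

/- ===================== Limit sets of sequences of sets ===================== -/

/-- The upper limit set of a sequence of sets. -/
def limitSet (D : ℕ → Set (T1 × ℝ)) : Set (T1 × ℝ) :=
  ⋂ n, closure (⋃ m, D (n + m))

theorem limitC_dec (D : ℕ → Set (T1 × ℝ)) (n : ℕ) :
    closure (⋃ m, D (n + 1 + m)) ⊆ closure (⋃ m, D (n + m)) := by
  apply closure_mono
  apply Set.iUnion_subset
  intro m
  have : n + 1 + m = n + (m + 1) := by omega
  rw [this]
  exact Set.subset_iUnion (fun m => D (n + m)) (m + 1)

theorem limitSet_subset (D : ℕ → Set (T1 × ℝ)) {Z : Set (T1 × ℝ)} (hZ : IsClosed Z)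
    (m₀ : ℕ) (hDZ : ∀ m, m₀ ≤ m → D m ⊆ Z) : limitSet D ⊆ Z := by
  intro p hp
  have hm := Set.mem_iInter.1 hp m₀
  have hsub : (⋃ m, D (m₀ + m)) ⊆ Z :=
    Set.iUnion_subset (fun m => hDZ (m₀ + m) (Nat.le_add_right _ _))
  exact hZ.closure_subset_iff.2 hsub hm

theorem limitSet_nonempty (D : ℕ → Set (T1 × ℝ)) {R : ℝ}
    (hR : ∀ m, D m ⊆ (univ : Set T1) ×ˢ Icc (-R) R) (hne : ∀ m, (D m).Nonempty) :
    (limitSet D).Nonempty := by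
  set C := fun n => closure (⋃ m, D (n + m)) with hC
  have hCcl : ∀ n, IsClosed (C n) := fun n => isClosed_closure
  have hCsub : ∀ n, C n ⊆ (univ : Set T1) ×ˢ Icc (-R) R := by
    intro n
    apply closure_minimal
    · exact Set.iUnion_subset (fun m => hR (n + m))
    · exact (isCompact_univ.prod isCompact_Icc).isClosed
  have hCcpt : ∀ n, IsCompact (C n) := fun n =>
    (isCompact_univ.prod isCompact_Icc).of_isClosed_subset (hCcl n) (hCsub n)
  have hCne : ∀ n, (C n).Nonempty := by
    intro n
    apply (hne n).mono
    refine subset_trans ?_ subset_closure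
    have : D n = D (n + 0) := by rw [Nat.add_zero]
    rw [this]
    exact Set.subset_iUnion (fun m => D (n + m)) 0
  exact IsCompact.nonempty_iInter_of_sequence_nonempty_isCompact_isClosed C
    (limitC_dec D) hCne (hCcpt 0) hCcl

theorem limitSet_cpt (D : ℕ → Set (T1 × ℝ)) {R : ℝ}
    (hR : ∀ m, D m ⊆ (univ : Set T1) ×ˢ Icc (-R) R) : IsCompact (limitSet D) := by
  apply (isCompact_univ.prod (isCompact_Icc (a := -R) (b := R))).of_isClosed_subset
    (isClosed_iInter (fun n => isClosed_closure))
  refine subset_trans (Set.iInter_subset _ 0) ?_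
  apply closure_minimal
  · exact Set.iUnion_subset (fun m => hR (0 + m))
  · exact (isCompact_univ.prod isCompact_Icc).isClosed

theorem limitSet_inv (D : ℕ → Set (T1 × ℝ)) (h : T1 × ℝ ≃ₜ T1 × ℝ)
    (hD : ∀ m, h '' D m = D (m + 1)) : h '' limitSet D = limitSet D := by
  set C := fun n => closure (⋃ m, D (n + m)) with hC
  have himg : ∀ n, h '' C n = C (n + 1) := by
    intro n
    rw [hC]
    simp only
    rw [h.image_closure, Set.image_iUnion]
    have huni : (⋃ i, h '' D (n + i)) = ⋃ m, D (n + 1 + m) := by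
      apply Set.iUnion_congr
      intro m
      rw [hD (n + m)]
      have : n + m + 1 = n + 1 + m := by omega
      rw [this]
    rw [huni]
  have himgI : h '' limitSet D = ⋂ n, h '' C n :=
    Set.image_iInter h.bijective C
  rw [himgI]
  have hshift : (⋂ n, h '' C n) = ⋂ n, C (n + 1) := Set.iInter_congr himg
  rw [hshift]
  have hlim : limitSet D = ⋂ n, C n := rfl
  rw [hlim]
  apply Set.Subset.antisymm
  · intro p hp
    rw [Set.mem_iInter] at hp ⊢
    intro n
    cases n with
    | zero => exact limitC_dec D 0 (hp 0)
    | succ k => exact hp k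
  · intro p hp
    rw [Set.mem_iInter] at hp ⊢
    intro n
    exact hp (n + 1)

/- ===================== Curves pushed by the dynamics ===================== -/

/-- Forward push-forwards of a curve under the skew product. -/
def curveF (ω : ℝ) (F : T1 → ℝ → ℝ) (γ : T1 → ℝ) : ℕ → T1 → ℝ
  | 0 => γ
  | n+1 => fun θ => F (θ - (ω:T1)) (curveF ω F γ n (θ - (ω:T1)))

/-- Backward pull-backs of a curve under the skew product. -/
noncomputable def curveB (hF : IsQpfLift ω F) (γ : T1 → ℝ) : ℕ → T1 → ℝ
  | 0 => γ
  | n+1 => fun θ => Finv hF θ (curveB hF γ n (θ + (ω:T1)))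

variable {γ : T1 → ℝ} {N : ℕ}

theorem curveF_congr (ω : ℝ) (F : T1 → ℝ → ℝ) (γ : T1 → ℝ) {i j : ℕ} (h : i = j)
    (θ : T1) : curveF ω F γ i θ = curveF ω F γ j θ := by rw [h]

theorem curveB_congr (hF : IsQpfLift ω F) (γ : T1 → ℝ) {i j : ℕ} (h : i = j)
    (θ : T1) : curveB hF γ i θ = curveB hF γ j θ := by rw [h]

theorem curveF_equiv (ω : ℝ) (F : T1 → ℝ → ℝ) (γ : T1 → ℝ) (n : ℕ) (θ : T1) :
    F θ (curveF ω F γ n θ) = curveF ω F γ (n+1) (θ + (ω:T1)) := by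
  show _ = F (θ + (ω:T1) - (ω:T1)) (curveF ω F γ n (θ + (ω:T1) - (ω:T1)))
  rw [add_sub_cancel_right]

theorem curveB_equiv (hF : IsQpfLift ω F) (γ : T1 → ℝ) (n : ℕ) (θ : T1) :
    F θ (curveB hF γ (n+1) θ) = curveB hF γ n (θ + (ω:T1)) := by
  show F θ (Finv hF θ (curveB hF γ n (θ + (ω:T1)))) = _
  rw [F_Finv hF]

theorem curveF_cont (hF : IsQpfLift ω F) (hγ : Continuous γ) (n : ℕ) :
    Continuous (curveF ω F γ n) := by
  induction n with
  | zero => exact hγ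
  | succ n ih =>
      show Continuous fun θ => F (θ - (ω:T1)) (curveF ω F γ n (θ - (ω:T1)))
      exact hF.cont.comp ((continuous_id.sub continuous_const).prodMk
        (ih.comp (continuous_id.sub continuous_const)))

theorem curveB_cont (hF : IsQpfLift ω F) (hγ : Continuous γ) (n : ℕ) :
    Continuous (curveB hF γ n) := by
  induction n with
  | zero => exact hγ
  | succ n ih =>
      show Continuous fun θ => Finv hF θ (curveB hF γ n (θ + (ω:T1)))
      exact (finv_cont hF).comp (continuous_id.prodMk
        (ih.comp (continuous_id.add continuous_const)))

theorem curveF_fiberIter (ω : ℝ) (F : T1 → ℝ → ℝ) (γ : T1 → ℝ) :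
    ∀ (n : ℕ) (θ : T1), curveF ω F γ n (θ + n • (ω:T1)) = fiberIter ω F n θ (γ θ) := by
  intro n
  induction n with
  | zero => intro θ; simp [curveF, fiberIter]
  | succ n ih =>
      intro θ
      have harr : θ + (n+1) • (ω:T1) - (ω:T1) = θ + n • (ω:T1) := by
        rw [succ_nsmul, ← add_assoc, add_sub_cancel_right]
      show F (θ + (n+1) • (ω:T1) - (ω:T1)) (curveF ω F γ n (θ + (n+1) • (ω:T1) - (ω:T1)))
        = fiberIter ω F (n+1) θ (γ θ)
      rw [harr, ih θ, fiberIter_succ']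

theorem curveB_fiberIter (hF : IsQpfLift ω F) (γ : T1 → ℝ) :
    ∀ (j n : ℕ) (θ : T1),
      fiberIter ω F j θ (curveB hF γ (n + j) θ) = curveB hF γ n (θ + j • (ω:T1)) := by
  intro j
  induction j with
  | zero => intro n θ; simp [fiberIter]
  | succ j ih =>
      intro n θ
      show fiberIter ω F j (θ + (ω:T1)) (F θ (curveB hF γ ((n + j) + 1) θ)) = _
      rw [curveB_equiv hF, ih n (θ + (ω:T1)), nsmul_succ_rot]

/- --- order transport --- -/

theorem curveF_gt_base (hF : IsQpfLift ω F) (hA : IsInvStrip ω F A)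
    (hbase : ∀ θ, phiSup A θ < γ θ) : ∀ (n : ℕ) (θ : T1), phiSup A θ < curveF ω F γ n θ := by
  intro n
  induction n with
  | zero => exact hbase
  | succ n ih =>
      intro θ
      have h := (hF.mono (θ - (ω:T1))) (ih (θ - (ω:T1)))
      rw [phiSup_equiv hF hA (θ - (ω:T1)), sub_add_cancel] at h
      exact h

theorem curveF_lt_base {B : Set (T1 × ℝ)} (hF : IsQpfLift ω F) (hB : IsInvStrip ω F B)
    (hbase : ∀ θ, γ θ < phiInf B θ) : ∀ (n : ℕ) (θ : T1), curveF ω F γ n θ < phiInf B θ := by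
  intro n
  induction n with
  | zero => exact hbase
  | succ n ih =>
      intro θ
      have h := (hF.mono (θ - (ω:T1))) (ih (θ - (ω:T1)))
      rw [phiInf_equiv hF hB (θ - (ω:T1)), sub_add_cancel] at h
      exact h

theorem curveB_gt_base (hF : IsQpfLift ω F) (hA : IsInvStrip ω F A)
    (hbase : ∀ θ, phiSup A θ < γ θ) : ∀ (n : ℕ) (θ : T1), phiSup A θ < curveB hF γ n θ := by
  intro n
  induction n with
  | zero => exact hbase
  | succ n ih =>
      intro θ
      have h := (Finv_strictMono hF θ) (ih (θ + (ω:T1)))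
      have he : Finv hF θ (phiSup A (θ + (ω:T1))) = phiSup A θ := by
        rw [← phiSup_equiv hF hA θ, Finv_F hF]
      rw [he] at h
      exact h

theorem curveB_lt_base {B : Set (T1 × ℝ)} (hF : IsQpfLift ω F) (hB : IsInvStrip ω F B)
    (hbase : ∀ θ, γ θ < phiInf B θ) : ∀ (n : ℕ) (θ : T1), curveB hF γ n θ < phiInf B θ := by
  intro n
  induction n with
  | zero => exact hbase
  | succ n ih =>
      intro θ
      have h := (Finv_strictMono hF θ) (ih (θ + (ω:T1)))
      have he : Finv hF θ (phiInf B (θ + (ω:T1))) = phiInf B θ := by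
        rw [← phiInf_equiv hF hB θ, Finv_F hF]
      rw [he] at h
      exact h

/- --- the chain lemmas --- -/

theorem curveF_chain (hF : IsQpfLift ω F)
    (habN : ∀ θ, γ θ < curveF ω F γ N θ) :
    ∀ (n : ℕ) (θ : T1), curveF ω F γ n θ < curveF ω F γ (n + N) θ := by
  intro n
  induction n with
  | zero =>
      intro θ
      rw [curveF_congr ω F γ (Nat.zero_add N) θ]
      exact habN θ
  | succ n ih =>
      intro θ
      have h := (hF.mono (θ - (ω:T1))) (ih (θ - (ω:T1)))
      have heq : curveF ω F γ ((n + N) + 1) θ = curveF ω F γ ((n+1) + N) θ :=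
        curveF_congr ω F γ (by omega) θ
      exact heq ▸ h

theorem curveB_chain (hF : IsQpfLift ω F)
    (habN' : ∀ θ, curveB hF γ N θ < γ θ) :
    ∀ (n : ℕ) (θ : T1), curveB hF γ (n + N) θ < curveB hF γ n θ := by
  intro n
  induction n with
  | zero =>
      intro θ
      rw [curveB_congr hF γ (Nat.zero_add N) θ]
      exact habN' θ
  | succ n ih =>
      intro θ
      have h := (Finv_strictMono hF θ) (ih (θ + (ω:T1)))
      have heq : curveB hF γ ((n + N) + 1) θ = curveB hF γ ((n+1) + N) θ :=
        curveB_congr hF γ (by omega) θ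
      show curveB hF γ ((n+1) + N) θ < curveB hF γ (n+1) θ
      rw [← heq]
      exact h

theorem curveF_ge_res (hF : IsQpfLift ω F) (hN : 1 ≤ N)
    (habN : ∀ θ, γ θ < curveF ω F γ N θ) :
    ∀ j, N ≤ j → ∃ r, r < N ∧ ∀ θ, curveF ω F γ (N + r) θ ≤ curveF ω F γ j θ := by
  intro j
  induction j using Nat.strong_induction_on with
  | _ j ih =>
      intro hj
      by_cases h2 : j < 2*N
      · refine ⟨j - N, by omega, fun θ => ?_⟩
        rw [curveF_congr ω F γ (show N + (j - N) = j by omega) θ]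
      · obtain ⟨r, hr, hle⟩ := ih (j - N) (by omega) (by omega)
        refine ⟨r, hr, fun θ => ?_⟩
        calc curveF ω F γ (N + r) θ ≤ curveF ω F γ (j - N) θ := hle θ
        _ ≤ curveF ω F γ ((j - N) + N) θ := (curveF_chain hF habN (j - N) θ).le
        _ = curveF ω F γ j θ := curveF_congr ω F γ (by omega) θ

theorem curveB_le_res (hF : IsQpfLift ω F) (hN : 1 ≤ N)
    (habN' : ∀ θ, curveB hF γ N θ < γ θ) :
    ∀ m, ∃ r, r < N ∧ ∀ θ, curveB hF γ m θ ≤ curveB hF γ r θ := by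
  intro m
  induction m using Nat.strong_induction_on with
  | _ m ih =>
      by_cases h1 : m < N
      · exact ⟨m, h1, fun θ => le_refl _⟩
      · obtain ⟨r, hr, hle⟩ := ih (m - N) (by omega)
        refine ⟨r, hr, fun θ => ?_⟩
        calc curveB hF γ m θ = curveB hF γ ((m - N) + N) θ :=
              curveB_congr hF γ (by omega) θ
        _ ≤ curveB hF γ (m - N) θ := (curveB_chain hF habN' (m - N) θ).le
        _ ≤ curveB hF γ r θ := hle θ

/- --- envelope curves --- -/

/-- Pointwise minimum of the curves `curveF (N + r)` for `r ≤ k`. -/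
def minCurve (ω : ℝ) (F : T1 → ℝ → ℝ) (γ : T1 → ℝ) (N : ℕ) : ℕ → T1 → ℝ
  | 0 => curveF ω F γ N
  | k+1 => fun θ => min (minCurve ω F γ N k θ) (curveF ω F γ (N + (k+1)) θ)

/-- Pointwise maximum of the curves `curveB r` for `r ≤ k`. -/
noncomputable def maxCurve (hF : IsQpfLift ω F) (γ : T1 → ℝ) : ℕ → T1 → ℝ
  | 0 => curveB hF γ 0
  | k+1 => fun θ => max (maxCurve hF γ k θ) (curveB hF γ (k+1) θ)

theorem minCurve_cont (hF : IsQpfLift ω F) (hγ : Continuous γ) (k : ℕ) :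
    Continuous (minCurve ω F γ N k) := by
  induction k with
  | zero => exact curveF_cont hF hγ N
  | succ k ih => exact ih.min (curveF_cont hF hγ _)

theorem maxCurve_cont (hF : IsQpfLift ω F) (hγ : Continuous γ) (k : ℕ) :
    Continuous (maxCurve hF γ k) := by
  induction k with
  | zero => exact curveB_cont hF hγ 0
  | succ k ih => exact ih.max (curveB_cont hF hγ _)

theorem minCurve_le (k r : ℕ) (hr : r ≤ k) (θ : T1) :
    minCurve ω F γ N k θ ≤ curveF ω F γ (N + r) θ := by
  induction k with
  | zero =>
      have : r = 0 := by omega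
      subst this
      exact le_of_eq (curveF_congr ω F γ (by omega) θ)
  | succ k ih =>
      rcases Nat.lt_or_ge r (k+1) with h | h
      · exact le_trans (min_le_left _ _) (ih (by omega))
      · have : r = k+1 := by omega
        subst this
        exact min_le_right _ _

theorem le_maxCurve (hF : IsQpfLift ω F) (k r : ℕ) (hr : r ≤ k) (θ : T1) :
    curveB hF γ r θ ≤ maxCurve hF γ k θ := by
  induction k with
  | zero =>
      have : r = 0 := by omega
      subst this
      exact le_refl _
  | succ k ih =>
      rcases Nat.lt_or_ge r (k+1) with h | h
      · exact le_trans (ih (by omega)) (le_max_left _ _)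
      · have : r = k+1 := by omega
        subst this
        exact le_max_right _ _

theorem minCurve_attained (k : ℕ) (θ : T1) :
    ∃ r, r ≤ k ∧ minCurve ω F γ N k θ = curveF ω F γ (N + r) θ := by
  induction k with
  | zero => exact ⟨0, le_refl 0, (curveF_congr ω F γ (by omega) θ).symm⟩
  | succ k ih =>
      obtain ⟨r, hr, heq⟩ := ih
      rcases le_total (minCurve ω F γ N k θ) (curveF ω F γ (N + (k+1)) θ) with h | h
      · exact ⟨r, by omega, by
          show min _ _ = _
          rw [min_eq_left h, heq]⟩
      · exact ⟨k+1, le_refl _, by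
          show min _ _ = _
          rw [min_eq_right h]⟩

theorem minCurve_gt_base (hF : IsQpfLift ω F) (hA : IsInvStrip ω F A)
    (hbase : ∀ θ, phiSup A θ < γ θ) (k : ℕ) (θ : T1) :
    phiSup A θ < minCurve ω F γ N k θ := by
  induction k with
  | zero => exact curveF_gt_base hF hA hbase N θ
  | succ k ih => exact lt_min ih (curveF_gt_base hF hA hbase _ θ)

theorem maxCurve_lt_base {B : Set (T1 × ℝ)} (hF : IsQpfLift ω F) (hB : IsInvStrip ω F B)
    (hbase : ∀ θ, γ θ < phiInf B θ) (k : ℕ) (θ : T1) :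
    maxCurve hF γ k θ < phiInf B θ := by
  induction k with
  | zero => exact curveB_lt_base hF hB hbase 0 θ
  | succ k ih => exact max_lt ih (curveB_lt_base hF hB hbase _ θ)

theorem Emin_le_curveF (hF : IsQpfLift ω F) (hN : 1 ≤ N)
    (habN : ∀ θ, γ θ < curveF ω F γ N θ) :
    ∀ j, N ≤ j → ∀ θ, minCurve ω F γ N (N-1) θ ≤ curveF ω F γ j θ := by
  intro j hj θ
  obtain ⟨r, hr, hle⟩ := curveF_ge_res hF hN habN j hj
  exact le_trans (minCurve_le (N-1) r (by omega) θ) (hle θ)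

theorem Emin_push (hF : IsQpfLift ω F) (hN : 1 ≤ N)
    (habN : ∀ θ, γ θ < curveF ω F γ N θ) (θ : T1) :
    minCurve ω F γ N (N-1) (θ + (ω:T1)) ≤ F θ (minCurve ω F γ N (N-1) θ) := by
  obtain ⟨r, hr, heq⟩ := minCurve_attained (N-1) θ
  rw [heq, curveF_equiv ω F γ (N+r) θ]
  exact Emin_le_curveF hF hN habN (N+r+1) (by omega) (θ + (ω:T1))

theorem curveB_le_max (hF : IsQpfLift ω F) (hN : 1 ≤ N)
    (habN' : ∀ θ, curveB hF γ N θ < γ θ) (m : ℕ) (θ : T1) :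
    curveB hF γ m θ ≤ maxCurve hF γ (N-1) θ := by
  obtain ⟨r, hr, hle⟩ := curveB_le_res hF hN habN' m
  exact le_trans (hle θ) (le_maxCurve hF (N-1) r (by omega) θ)

theorem skew_iter (ω : ℝ) (H : T1 → ℝ → ℝ) :
    ∀ (k : ℕ) (p : T1 × ℝ),
      (skew ω H)^[k] p = (p.1 + k • (ω:T1), fiberIter ω H k p.1 p.2) := by
  intro k
  induction k with
  | zero => intro p; simp [fiberIter]
  | succ k ih =>
      intro p
      rw [Function.iterate_succ_apply, ih]
      show ((skew ω H p).1 + k • (ω:T1), fiberIter ω H k (skew ω H p).1 (skew ω H p).2) = _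
      have h1 : (skew ω H p).1 = p.1 + (ω:T1) := rfl
      have h2 : (skew ω H p).2 = H p.1 p.2 := rfl
      rw [h1, h2, nsmul_succ_rot]
      have h3 : fiberIter ω H k (p.1 + (ω:T1)) (H p.1 p.2) = fiberIter ω H (k+1) p.1 p.2 :=
        (fiberIter_succ ω H k p.1 p.2).symm
      rw [h3]

theorem gap_modulus (hF : IsQpfLift ω F) (R : ℝ) {ε : ℝ} (hε : 0 < ε) :
    ∃ δ : ℝ, 0 < δ ∧ ∀ (θ : T1) (a b : ℝ), a ∈ Icc (-R) R → b ∈ Icc (-R) R →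
      a ≤ b → ε ≤ F θ b - F θ a → δ ≤ b - a := by
  set g : (T1 × ℝ) × ℝ → ℝ := fun q => F q.1.1 (q.1.2 + q.2) - F q.1.1 q.1.2 with hg
  have hgc : Continuous g := by
    apply Continuous.sub
    · exact hF.cont.comp ((continuous_fst.comp continuous_fst).prodMk
        ((continuous_snd.comp continuous_fst).add continuous_snd))
    · exact hF.cont.comp continuous_fst
  set Bad : Set ((T1 × ℝ) × ℝ) :=
    {q | q.1.2 ∈ Icc (-R) R ∧ q.2 ∈ Icc (0:ℝ) 1 ∧ ε ≤ g q} with hBad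
  have hBadcl : IsClosed Bad := by
    have h1 : IsClosed {q : (T1 × ℝ) × ℝ | q.1.2 ∈ Icc (-R) R} :=
      isClosed_Icc.preimage (continuous_snd.comp continuous_fst)
    have h2 : IsClosed {q : (T1 × ℝ) × ℝ | q.2 ∈ Icc (0:ℝ) 1} :=
      isClosed_Icc.preimage continuous_snd
    have h3 : IsClosed {q : (T1 × ℝ) × ℝ | ε ≤ g q} :=
      isClosed_le continuous_const hgc
    exact h1.inter (h2.inter h3)
  have hBadcpt : IsCompact Bad := by
    apply (((isCompact_univ.prod (isCompact_Icc (a := -R) (b := R))).prod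
      (isCompact_Icc (a := (0:ℝ)) (b := 1)))).of_isClosed_subset hBadcl
    rintro ⟨⟨θ, a⟩, t⟩ ⟨h1, h2, _⟩
    exact ⟨⟨mem_univ _, h1⟩, h2⟩
  set T := (fun q : (T1 × ℝ) × ℝ => q.2) '' Bad with hT
  have hTcl : IsClosed T := (hBadcpt.image continuous_snd).isClosed
  have h0T : (0:ℝ) ∉ T := by
    rintro ⟨⟨⟨θ, a⟩, t⟩, ⟨_, _, hle⟩, ht⟩
    simp only at ht
    rw [hg] at hle
    simp only at hle
    rw [ht, add_zero, sub_self] at hle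
    exact absurd hle (not_le.2 hε)
  obtain ⟨δ₀, hδ₀, hball⟩ : ∃ δ₀ > 0, Metric.ball (0:ℝ) δ₀ ⊆ Tᶜ :=
    Metric.mem_nhds_iff.1 (hTcl.isOpen_compl.mem_nhds h0T)
  refine ⟨min δ₀ 1, lt_min hδ₀ one_pos, ?_⟩
  intro θ a b ha hb hab hgap
  by_contra hlt
  push_neg at hlt
  have ht1 : b - a ≤ 1 := le_of_lt (lt_of_lt_of_le hlt (min_le_right _ _))
  have hmem : ((θ, a), b - a) ∈ Bad := by
    refine ⟨ha, ⟨by simp only; linarith, ht1⟩, ?_⟩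
    show ε ≤ F θ (a + (b - a)) - F θ a
    have heq : a + (b - a) = b := by ring
    rw [heq]
    exact hgap
  have hmemT : b - a ∈ T := ⟨_, hmem, rfl⟩
  have hballmem : (b - a) ∈ Metric.ball (0:ℝ) δ₀ := by
    rw [Metric.mem_ball, Real.dist_eq, sub_zero, abs_of_nonneg (by linarith)]
    exact lt_of_lt_of_le hlt (min_le_left _ _)
  exact (hball hballmem) hmemT

end Climb

open Climb Set

/-- case (𝒜1)(b) of the Claim in the proof of Proposition 4.1:
if between two neighboring minimal invariant strips there is a continuous curve mapped
strictly above itself by some iterate of `F`, then every `ε`-perturbed orbit starting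
above `A` eventually climbs above `B`. -/
theorem curve_above_case_climbing
    (ω : ℝ) (hω : Irrational ω)
    (F : T1 → ℝ → ℝ) (hF : IsQpfLift ω F)
    (ε : ℝ) (hε : 0 < ε)
    (A B : Set (T1 × ℝ))
    (hA : IsMinimalStrip ω F A) (hB : IsMinimalStrip ω F B) (hAB : StripLt A B)
    (hgap : ¬ ∃ S : Set (T1 × ℝ), IsInvStrip ω F S ∧ StripLt A S ∧ StripLt S B)
    (C : Set (T1 × ℝ))
    (hC : C = {p : T1 × ℝ | phiSup A p.1 < p.2 ∧ p.2 < phiInf B p.1})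
    (γ : T1 → ℝ) (hγ : Continuous γ) (hγC : ∀ θ, (θ, γ θ) ∈ C)
    (N : ℕ) (hN : 1 ≤ N)
    (habove : ∀ θ, γ (θ + N • (ω : T1)) < fiberIter ω F N θ (γ θ)) :
    ∀ (θ₀ : T1) (x₀ : ℝ), phiSup A θ₀ < x₀ →
      ∃ k : ℕ, phiSup B (θ₀ + k • (ω : T1)) <
        fiberIter ω (fun θ x => F θ x + ε) k θ₀ x₀ := by

  intro θ₀ x₀ hx₀
  classical
  obtain ⟨hAstrip, hAmin⟩ := hA
  obtain ⟨hBstrip, hBmin⟩ := hB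
  have hskewinj : Function.Injective (skew ω F) := by
    rw [← skewHomeo_coe hF]; exact (skewHomeo hF).injective
  have hγA : ∀ θ, phiSup A θ < γ θ := fun θ => by
    have h := hγC θ; rw [hC] at h; exact h.1
  have hγB : ∀ θ, γ θ < phiInf B θ := fun θ => by
    have h := hγC θ; rw [hC] at h; exact h.2
  have habN : ∀ θ, γ θ < curveF ω F γ N θ := by
    intro θ
    have h := habove (θ - N • (ω : T1))
    rw [sub_add_cancel] at h
    rwa [← curveF_fiberIter ω F γ N (θ - N • (ω : T1)), sub_add_cancel] at h
  have habN' : ∀ θ, curveB hF γ N θ < γ θ := by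
    intro θ
    have h1 := curveB_fiberIter hF γ N 0 θ
    have h3 : fiberIter ω F N θ (curveB hF γ (0 + N) θ) < fiberIter ω F N θ (γ θ) := by
      rw [h1]; exact habove θ
    have h4 := (fiberIter_strictMono hF N θ).lt_iff_lt.1 h3
    rwa [curveB_congr hF γ (Nat.zero_add N) θ] at h4
  set G : T1 → ℝ → ℝ := fun θ x => F θ x + ε with hGdef
  have hG : IsQpfLift ω G := by
    constructor
    · exact hF.cont.add continuous_const
    · intro θ a b hab
      exact add_lt_add_left (hF.mono θ hab) ε
    · intro θ y
      refine ⟨Finv hF θ (y - ε), ?_⟩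
      show F θ (Finv hF θ (y - ε)) + ε = y
      rw [F_Finv hF]; ring
    · intro θ x
      show F θ (x + 1) + ε = F θ x + ε + 1
      rw [hF.per]; ring
  by_contra hcon
  set Θ : ℕ → T1 := fun k => θ₀ + k • (ω : T1) with hΘdef
  set X : ℕ → ℝ := fun k => fiberIter ω G k θ₀ x₀ with hXdef
  have hconX : ∀ k, X k ≤ phiSup B (Θ k) := fun k =>
    not_lt.1 (fun h => hcon ⟨k, h⟩)
  have hX0 : X 0 = x₀ := rfl
  have hΘ0 : Θ 0 = θ₀ := by show θ₀ + 0 • (ω:T1) = θ₀; rw [zero_nsmul, add_zero]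
  have hX_succ : ∀ k, X (k+1) = F (Θ k) (X k) + ε := by
    intro k
    show fiberIter ω G (k+1) θ₀ x₀ = F (Θ k) (X k) + ε
    rw [fiberIter_succ' ω G k]
  have hΘ_succ : ∀ k, Θ (k+1) = Θ k + (ω:T1) := by
    intro k
    show θ₀ + (k+1) • (ω:T1) = θ₀ + k • (ω:T1) + (ω:T1)
    rw [succ_nsmul, ← add_assoc]
  have horbA : ∀ k, phiSup A (Θ k) < X k := by
    intro k
    induction k with
    | zero => rw [hΘ0]; exact hx₀
    | succ k ih =>
        rw [hX_succ k, hΘ_succ k, ← phiSup_equiv hF hAstrip (Θ k)]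
        have h := hF.mono (Θ k) ih
        linarith
  have horbAε : ∀ k, phiSup A (Θ (k+1)) + ε ≤ X (k+1) := by
    intro k
    rw [hX_succ k, hΘ_succ k, ← phiSup_equiv hF hAstrip (Θ k)]
    have h := (hF.mono (Θ k)).monotone (le_of_lt (horbA k))
    linarith
  obtain ⟨RA, hRA0, hRA⟩ := cpt_bound hAstrip.1
  obtain ⟨RB, hRB0, hRB⟩ := cpt_bound hBstrip.1
  set R : ℝ := RA + RB with hRdef
  have hφA_bound : ∀ θ, |phiSup A θ| ≤ RA := fun θ => hRA _ (phiSup_mem hAstrip θ)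
  have hφB_bound : ∀ θ, |phiSup B θ| ≤ RB := fun θ => hRB _ (phiSup_mem hBstrip θ)
  have hφBinf_bound : ∀ θ, |phiInf B θ| ≤ RB := fun θ => hRB _ (phiInf_mem hBstrip θ)
  have hcurveB_band : ∀ m θ, curveB hF γ m θ ∈ Icc (-R) R := by
    intro m θ
    have h1 := curveB_gt_base hF hAstrip hγA m θ
    have h2 := curveB_lt_base hF hBstrip hγB m θ
    have h3 := abs_le.1 (hφA_bound θ)
    have h4 := abs_le.1 (hφBinf_bound θ)
    rw [mem_Icc, hRdef]
    exact ⟨by linarith [h3.1], by linarith [h4.2]⟩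
  -- ===== Stage 1 : the orbit climbs above some backward curve =====
  have hrangeA_ne : (Set.range (phiSup A)).Nonempty := ⟨_, ⟨θ₀, rfl⟩⟩
  have hbddA : BddBelow (Set.range (phiSup A)) := by
    refine ⟨-RA, ?_⟩
    rintro _ ⟨θ, rfl⟩
    linarith [(abs_le.1 (hφA_bound θ)).1]
  set m₀ := sInf (Set.range (phiSup A)) with hm₀def
  have hm₀le : ∀ θ, m₀ ≤ phiSup A θ := fun θ => csInf_le hbddA ⟨θ, rfl⟩
  obtain ⟨a, ⟨θ', rfl⟩, hθ'⟩ :=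
    Real.lt_sInf_add_pos hrangeA_ne (show (0:ℝ) < ε/8 by linarith)
  set DY : ℕ → Set (T1 × ℝ) := fun m => {p : T1 × ℝ | p.2 = curveB hF γ m p.1} with hDY
  have hDYband : ∀ m, DY m ⊆ (Set.univ : Set T1) ×ˢ Icc (-R) R := by
    rintro m ⟨θ, x⟩ hx
    have hx' : x = curveB hF γ m θ := hx
    refine ⟨Set.mem_univ _, ?_⟩
    rw [hx']
    exact hcurveB_band m θ
  have hDYne : ∀ m, (DY m).Nonempty := fun m => ⟨(θ₀, curveB hF γ m θ₀), rfl⟩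
  have hDYstep : ∀ m, (skewHomeo hF).symm '' DY m = DY (m+1) := by
    intro m
    ext p
    constructor
    · rintro ⟨q, hq, rfl⟩
      have hq' : q.2 = curveB hF γ m q.1 := hq
      show ((skewHomeo hF).symm q).2 = curveB hF γ (m+1) ((skewHomeo hF).symm q).1
      have h1 : (skewHomeo hF).symm q = (q.1 - (ω:T1), Finv hF (q.1 - (ω:T1)) q.2) := rfl
      rw [h1]
      show Finv hF (q.1 - (ω:T1)) q.2 = curveB hF γ (m+1) (q.1 - (ω:T1))
      have h2 : curveB hF γ (m+1) (q.1 - (ω:T1))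
          = Finv hF (q.1 - (ω:T1)) (curveB hF γ m (q.1 - (ω:T1) + (ω:T1))) := rfl
      rw [h2, sub_add_cancel, ← hq']
    · intro hp
      have hp2 : p.2 = curveB hF γ (m+1) p.1 := hp
      refine ⟨skewHomeo hF p, ?_, (skewHomeo hF).symm_apply_apply p⟩
      show (skewHomeo hF p).2 = curveB hF γ m (skewHomeo hF p).1
      have h1 : skewHomeo hF p = (p.1 + (ω:T1), F p.1 p.2) := rfl
      rw [h1]
      show F p.1 p.2 = curveB hF γ m (p.1 + (ω:T1))
      rw [hp2, curveB_equiv hF]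
  set Y := limitSet DY with hYdef
  have hYne : Y.Nonempty := limitSet_nonempty DY hDYband hDYne
  have hYcpt : IsCompact Y := limitSet_cpt DY hDYband
  have hYinv' : (skewHomeo hF).symm '' Y = Y := limitSet_inv DY (skewHomeo hF).symm hDYstep
  have hYinv : skew ω F '' Y = Y := by
    conv_lhs => rw [← hYinv']
    rw [← skewHomeo_coe hF, ← Set.image_comp, Homeomorph.self_comp_symm, Set.image_id]
  have hYbelow : ∀ p ∈ Y, p.2 ≤ maxCurve hF γ (N-1) p.1 := by
    intro p hp
    have hcl : IsClosed {p : T1 × ℝ | p.2 ≤ maxCurve hF γ (N-1) p.1} :=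
      isClosed_le continuous_snd ((maxCurve_cont hF hγ (N-1)).comp continuous_fst)
    refine limitSet_subset DY hcl 0 ?_ hp
    intro m _ q hq
    have hq' : q.2 = curveB hF γ m q.1 := hq
    show q.2 ≤ maxCurve hF γ (N-1) q.1
    rw [hq']
    exact curveB_le_max hF hN habN' m q.1
  have hYabove : ∀ p ∈ Y, phiInf A p.1 ≤ p.2 := by
    intro p hp
    refine limitSet_subset DY (region_ge_closed hAstrip.1 (strip_fib_nonempty hAstrip))
      0 ?_ hp
    intro m _ q hq
    have hq' : q.2 = curveB hF γ m q.1 := hq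
    show phiInf A q.1 ≤ q.2
    have h2 := curveB_gt_base hF hAstrip hγA m q.1
    have h3 := phiInf_le_phiSup hAstrip q.1
    rw [hq']
    linarith
  have hYfib : ∀ θ, (fib Y θ).Nonempty := fib_nonempty hω hYcpt hYne hYinv
  have hVYstrip : IsInvStrip ω F (hull Y) := hull_isInvStrip hF hYcpt hYinv hYfib
  have hVYltB : StripLt (hull Y) B := by
    intro θ
    rw [phiSup_hull hYcpt hYfib]
    have hsup : sSup (fib Y θ) ≤ maxCurve hF γ (N-1) θ :=
      csSup_le (hYfib θ) (fun b hb => hYbelow (θ, b) hb)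
    exact lt_of_le_of_lt hsup (maxCurve_lt_base hF hBstrip hγB (N-1) θ)
  have hnotA : ¬ StripLt A (hull Y) := fun hlt => hgap ⟨hull Y, hVYstrip, hlt, hVYltB⟩
  rw [StripLt] at hnotA
  push_neg at hnotA
  obtain ⟨θh, hθh⟩ := hnotA
  rw [phiInf_hull hYcpt hYfib] at hθh
  have hmemY : (θh, sInf (fib Y θh)) ∈ Y := fibInf_mem hYcpt (hYfib θh)
  have hmemA : (θh, sInf (fib Y θh)) ∈ A :=
    (mem_strip_iff hAstrip).2 ⟨hYabove _ hmemY, hθh⟩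
  set K1 := Y ∩ A with hK1def
  have hK1cpt : IsCompact K1 := hYcpt.inter_right hAstrip.1.isClosed
  have hK1ne : K1.Nonempty := ⟨_, hmemY, hmemA⟩
  have hK1inv : skew ω F '' K1 = K1 := by
    rw [hK1def, Set.image_inter hskewinj, hYinv, hAstrip.2.1]
  have hgraphY : ∀ θ, (θ, phiSup A θ) ∈ Y := by
    intro θ
    exact ((sup_graph_mem_of_subset_minimal hω hF ⟨hAstrip, hAmin⟩ hK1cpt hK1ne hK1inv
      Set.inter_subset_right θ).2).1
  have hclmem : (θ', phiSup A θ') ∈ closure (⋃ m, DY (0 + m)) :=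
    Set.mem_iInter.1 (hgraphY θ') 0
  rw [Metric.mem_closure_iff] at hclmem
  obtain ⟨q, hqU, hqdist⟩ := hclmem (ε/8) (by linarith)
  obtain ⟨m, hqm⟩ : ∃ m, q ∈ DY (0 + m) := Set.mem_iUnion.1 hqU
  have hq2 : q.2 = curveB hF γ (0+m) q.1 := hqm
  have hdist2 : |phiSup A θ' - q.2| < ε/8 := by
    have h : dist (phiSup A θ') q.2 ≤ dist ((θ', phiSup A θ') : T1 × ℝ) q := by
      rw [Prod.dist_eq]
      exact le_max_right _ _
    have h2 := lt_of_le_of_lt h hqdist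
    rwa [Real.dist_eq] at h2
  set V := {θ : T1 | curveB hF γ (0+m) θ < m₀ + ε/4} with hVdef
  have hVopen : IsOpen V := isOpen_lt (curveB_cont hF hγ (0+m)) continuous_const
  have hVne : V.Nonempty := by
    refine ⟨q.1, ?_⟩
    show curveB hF γ (0+m) q.1 < m₀ + ε/4
    have h1 := abs_lt.1 hdist2
    rw [← hq2]
    linarith [h1.1, h1.2]
  obtain ⟨k₁, hk₁1, hk₁V⟩ := forward_hit hω θ₀ hVopen hVne 1
  have hΘk₁ : curveB hF γ (0+m) (Θ k₁) < m₀ + ε/4 := hk₁V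
  have hride0 : curveB hF γ (0+m) (Θ k₁) ≤ X k₁ := by
    obtain ⟨k₁', rfl⟩ : ∃ k, k₁ = k + 1 := ⟨k₁ - 1, by omega⟩
    have h2 := horbAε k₁'
    have h3 := hm₀le (Θ (k₁' + 1))
    linarith
  -- ===== riding the curves =====
  have hrideB : ∀ i, i ≤ (0+m) → curveB hF γ ((0+m) - i) (Θ (k₁ + i)) ≤ X (k₁ + i) := by
    intro i
    induction i with
    | zero => intro _; exact hride0
    | succ i ih =>
        intro hi
        have hprev := ih (by omega)
        have hmono := (hF.mono (Θ (k₁+i))).monotone hprev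
        have hstep : F (Θ (k₁+i)) (curveB hF γ ((0+m) - i) (Θ (k₁+i)))
            = curveB hF γ ((0+m) - (i+1)) (Θ (k₁+i) + (ω:T1)) := by
          rw [curveB_congr hF γ (show (0+m) - i = ((0+m) - (i+1)) + 1 by omega) (Θ (k₁+i))]
          exact curveB_equiv hF γ _ _
        rw [hstep] at hmono
        show curveB hF γ ((0+m) - (i+1)) (Θ (k₁+(i+1))) ≤ X (k₁+(i+1))
        rw [show k₁+(i+1) = (k₁+i)+1 by omega, hΘ_succ (k₁+i), hX_succ (k₁+i)]
        linarith
  have hrideγ : γ (Θ (k₁ + (0+m))) ≤ X (k₁ + (0+m)) := by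
    have h := hrideB (0+m) le_rfl
    rwa [curveB_congr hF γ (show (0+m) - (0+m) = 0 by omega)] at h
  set k₂ := k₁ + (0+m) with hk₂def
  have hrideF : ∀ i, curveF ω F γ i (Θ (k₂ + i)) ≤ X (k₂ + i) := by
    intro i
    induction i with
    | zero => exact hrideγ
    | succ i ih =>
        have hmono := (hF.mono (Θ (k₂+i))).monotone ih
        rw [curveF_equiv ω F γ i (Θ (k₂+i))] at hmono
        show curveF ω F γ (i+1) (Θ (k₂+(i+1))) ≤ X (k₂+(i+1))
        rw [show k₂+(i+1) = (k₂+i)+1 by omega, hΘ_succ (k₂+i), hX_succ (k₂+i)]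
        linarith
  set Em : T1 → ℝ := minCurve ω F γ N (N-1) with hEm
  have hEm_orbit : ∀ k, k₂ + N ≤ k → Em (Θ k) ≤ X k := by
    intro k hk
    obtain ⟨i, rfl⟩ : ∃ i, k = k₂ + i := ⟨k - k₂, by omega⟩
    have hiN : N ≤ i := by omega
    calc Em (Θ (k₂+i)) ≤ curveF ω F γ i (Θ (k₂+i)) := Emin_le_curveF hF hN habN i hiN _
    _ ≤ X (k₂+i) := hrideF i
  -- ===== the ω-limit set of the perturbed orbit =====
  set DL : ℕ → Set (T1 × ℝ) :=
    fun n => {p : T1 × ℝ | ∃ k : ℕ, p = (skew ω G)^[k₂ + N + n + k] (θ₀, x₀)} with hDL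
  have hPies : ∀ j : ℕ, (skew ω G)^[j] (θ₀, x₀) = (Θ j, X j) := by
    intro j
    rw [skew_iter ω G j (θ₀, x₀)]
  have hDLstep : ∀ n, (skewHomeo hG) '' DL n = DL (n+1) := by
    intro n
    ext p
    constructor
    · rintro ⟨q, ⟨k, rfl⟩, rfl⟩
      refine ⟨k, ?_⟩
      show skewHomeo hG ((skew ω G)^[k₂+N+n+k] (θ₀,x₀)) = (skew ω G)^[k₂+N+(n+1)+k] (θ₀,x₀)
      have hc : ⇑(skewHomeo hG) = skew ω G := skewHomeo_coe hG
      rw [hc, ← Function.iterate_succ_apply' (skew ω G)]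
      congr 1
      omega
    · rintro ⟨k, rfl⟩
      refine ⟨(skew ω G)^[k₂+N+n+k] (θ₀,x₀), ⟨k, rfl⟩, ?_⟩
      have hc : ⇑(skewHomeo hG) = skew ω G := skewHomeo_coe hG
      rw [hc, ← Function.iterate_succ_apply' (skew ω G)]
      congr 1
      omega
  have hDLband : ∀ n, DL n ⊆ (Set.univ : Set T1) ×ˢ Icc (-R) R := by
    rintro n p ⟨k, rfl⟩
    rw [hPies]
    refine ⟨Set.mem_univ _, ?_⟩
    rw [mem_Icc]
    constructor
    · have h1 := horbA (k₂+N+n+k)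
      have h2 := abs_le.1 (hφA_bound (Θ (k₂+N+n+k)))
      rw [hRdef]
      linarith [h2.1]
    · have h1 := hconX (k₂+N+n+k)
      have h2 := abs_le.1 (hφB_bound (Θ (k₂+N+n+k)))
      rw [hRdef]
      linarith [h2.2]
  have hDLne : ∀ n, (DL n).Nonempty := fun n => ⟨_, ⟨0, rfl⟩⟩
  set L := limitSet DL with hLdef
  have hLne : L.Nonempty := limitSet_nonempty DL hDLband hDLne
  have hLcpt : IsCompact L := limitSet_cpt DL hDLband
  have hLinvG : skew ω G '' L = L := by
    have h := limitSet_inv DL (skewHomeo hG) hDLstep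
    rwa [skewHomeo_coe hG] at h
  have hLfib : ∀ θ, (fib L θ).Nonempty := fib_nonempty hω hLcpt hLne hLinvG
  have hLEm : ∀ p ∈ L, Em p.1 ≤ p.2 := by
    intro p hp
    have hcl : IsClosed {p : T1 × ℝ | Em p.1 ≤ p.2} :=
      isClosed_le ((minCurve_cont hF hγ (N-1)).comp continuous_fst) continuous_snd
    refine limitSet_subset DL hcl 0 ?_ hp
    rintro n _ q ⟨k, rfl⟩
    rw [hPies]
    show Em (Θ (k₂+N+n+k)) ≤ X (k₂+N+n+k)
    exact hEm_orbit _ (by omega)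
  have hLB : ∀ p ∈ L, p.2 ≤ phiSup B p.1 := by
    intro p hp
    refine limitSet_subset DL (region_le_closed hBstrip.1 (strip_fib_nonempty hBstrip))
      0 ?_ hp
    rintro n _ q ⟨k, rfl⟩
    rw [hPies]
    show X (k₂+N+n+k) ≤ phiSup B (Θ (k₂+N+n+k))
    exact hconX _
  set ψ : T1 → ℝ := fun θ => sSup (fib L θ) with hψdef
  have hψequiv : ∀ θ, G θ (ψ θ) = ψ (θ + (ω:T1)) := fun θ =>
    fibSup_equiv hG hLcpt hLinvG (hLfib θ)
  have hψleB : ∀ θ, ψ θ ≤ phiSup B θ := by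
    intro θ
    apply csSup_le (hLfib θ)
    intro b hb
    exact hLB (θ, b) hb
  have hψmem : ∀ θ, (θ, ψ θ) ∈ L := fun θ => fibSup_mem hLcpt (hLfib θ)
  have hLband : ∀ p ∈ L, p.2 ∈ Icc (-R) R := fun p hp =>
    (limitSet_subset DL ((isCompact_univ.prod isCompact_Icc).isClosed) 0
      (fun n _ => hDLband n) hp).2
  have hψband : ∀ θ, ψ θ ∈ Icc (-R) R := fun θ => hLband _ (hψmem θ)
  have hφBband : ∀ θ, phiSup B θ ∈ Icc (-R) R := by
    intro θ
    have h := abs_le.1 (hφB_bound θ)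
    rw [mem_Icc, hRdef]
    exact ⟨by linarith [h.1], by linarith [h.2]⟩
  obtain ⟨δ, hδ0, hδ⟩ := gap_modulus hF R hε
  have hψgap : ∀ θ, ψ θ + δ ≤ phiSup B θ := by
    intro θ
    have h1 : F θ (ψ θ) + ε = ψ (θ + (ω:T1)) := hψequiv θ
    have h2 : ψ (θ + (ω:T1)) ≤ phiSup B (θ + (ω:T1)) := hψleB _
    rw [← phiSup_equiv hF hBstrip θ] at h2
    have h3 : ε ≤ F θ (phiSup B θ) - F θ (ψ θ) := by linarith
    have h4 := hδ θ (ψ θ) (phiSup B θ) (hψband θ) (hφBband θ) (hψleB θ) h3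
    linarith
  -- ===== pushing the limit set forward under F =====
  set DS : ℕ → Set (T1 × ℝ) := fun n => (skew ω F)^[n] '' L with hDS
  have hDSstep : ∀ n, (skewHomeo hF) '' DS n = DS (n+1) := by
    intro n
    show ⇑(skewHomeo hF) '' ((skew ω F)^[n] '' L) = (skew ω F)^[n+1] '' L
    rw [skewHomeo_coe hF, ← Set.image_comp, ← Function.iterate_succ' (skew ω F)]
  have hDS0 : DS 0 = L := by
    show (skew ω F)^[0] '' L = L
    rw [Function.iterate_zero, Set.image_id]
  have hDSlow : ∀ n, ∀ p ∈ DS n, Em p.1 ≤ p.2 := by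
    intro n
    induction n with
    | zero => intro p hp; rw [hDS0] at hp; exact hLEm p hp
    | succ n ih =>
        intro p hp
        have h1 : DS (n+1) = skew ω F '' DS n := by
          rw [← hDSstep n, skewHomeo_coe hF]
        rw [h1] at hp
        obtain ⟨q, hq, rfl⟩ := hp
        show Em ((skew ω F q).1) ≤ (skew ω F q).2
        have h2 : (skew ω F q).1 = q.1 + (ω:T1) := rfl
        have h3 : (skew ω F q).2 = F q.1 q.2 := rfl
        rw [h2, h3]
        calc Em (q.1 + (ω:T1)) ≤ F q.1 (Em q.1) := Emin_push hF hN habN q.1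
        _ ≤ F q.1 q.2 := (hF.mono q.1).monotone (ih q hq)
  have hDShigh : ∀ n, ∀ p ∈ DS n, p.2 ≤ ψ p.1 := by
    intro n
    induction n with
    | zero =>
        intro p hp
        rw [hDS0] at hp
        exact le_csSup (fib_cpt hLcpt p.1).bddAbove hp
    | succ n ih =>
        intro p hp
        have h1 : DS (n+1) = skew ω F '' DS n := by
          rw [← hDSstep n, skewHomeo_coe hF]
        rw [h1] at hp
        obtain ⟨q, hq, rfl⟩ := hp
        show (skew ω F q).2 ≤ ψ ((skew ω F q).1)
        have h2 : (skew ω F q).1 = q.1 + (ω:T1) := rfl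
        have h3 : (skew ω F q).2 = F q.1 q.2 := rfl
        rw [h2, h3]
        have h4 : F q.1 (ψ q.1) + ε = ψ (q.1 + (ω:T1)) := hψequiv q.1
        have h5 := (hF.mono q.1).monotone (ih q hq)
        linarith
  have hDSband : ∀ n, DS n ⊆ (Set.univ : Set T1) ×ˢ Icc (-R) R := by
    intro n p hp
    refine ⟨Set.mem_univ _, ?_⟩
    rw [mem_Icc]
    have h1 := hDSlow n p hp
    have h2 := hDShigh n p hp
    have h3 := minCurve_gt_base (N := N) hF hAstrip hγA (N-1) p.1
    have h4 := abs_le.1 (hφA_bound p.1)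
    have h5 := (hψband p.1)
    rw [mem_Icc] at h5
    constructor
    · rw [hRdef]; linarith [h4.1]
    · linarith [h5.2]
  have hDSne : ∀ n, (DS n).Nonempty := fun n => hLne.image _
  set Sstar := limitSet DS with hSdef
  have hSne : Sstar.Nonempty := limitSet_nonempty DS hDSband hDSne
  have hScpt : IsCompact Sstar := limitSet_cpt DS hDSband
  have hSinv : skew ω F '' Sstar = Sstar := by
    have h := limitSet_inv DS (skewHomeo hF) hDSstep
    rwa [skewHomeo_coe hF] at h
  have hSfib : ∀ θ, (fib Sstar θ).Nonempty := fib_nonempty hω hScpt hSne hSinv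
  have hSlow : ∀ p ∈ Sstar, Em p.1 ≤ p.2 := by
    intro p hp
    have hcl : IsClosed {p : T1 × ℝ | Em p.1 ≤ p.2} :=
      isClosed_le ((minCurve_cont hF hγ (N-1)).comp continuous_fst) continuous_snd
    exact limitSet_subset DS hcl 0 (fun n _ => hDSlow n) hp
  have hShigh : ∀ p ∈ Sstar, p.2 ≤ ψ p.1 := by
    intro p hp
    exact limitSet_subset DS (region_le_closed hLcpt hLfib) 0 (fun n _ => hDShigh n) hp
  have hSB : ∀ p ∈ Sstar, p.2 < phiInf B p.1 := by
    intro p hp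
    by_contra hge
    push_neg at hge
    have hpB : p ∈ B := by
      have h1 := hShigh p hp
      have h2 := hψgap p.1
      have : (p.1, p.2) ∈ B := (mem_strip_iff hBstrip).2 ⟨hge, by linarith⟩
      exact this
    set K2 := Sstar ∩ B with hK2
    have hK2cpt : IsCompact K2 := hScpt.inter_right hBstrip.1.isClosed
    have hK2ne : K2.Nonempty := ⟨p, hp, hpB⟩
    have hK2inv : skew ω F '' K2 = K2 := by
      rw [hK2, Set.image_inter hskewinj, hSinv, hBstrip.2.1]
    have hg := ((sup_graph_mem_of_subset_minimal hω hF ⟨hBstrip, hBmin⟩ hK2cpt hK2ne hK2inv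
      Set.inter_subset_right p.1).2).1
    have h1 := hShigh _ hg
    have h2 := hψgap p.1
    simp only at h1
    linarith
  have hVS : IsInvStrip ω F (hull Sstar) := hull_isInvStrip hF hScpt hSinv hSfib
  have hltA : StripLt A (hull Sstar) := by
    intro θ
    rw [phiInf_hull hScpt hSfib]
    have h1 : Em θ ≤ sInf (fib Sstar θ) :=
      le_csInf (hSfib θ) (fun b hb => hSlow (θ, b) hb)
    exact lt_of_lt_of_le (minCurve_gt_base (N := N) hF hAstrip hγA (N-1) θ) h1
  have hltB : StripLt (hull Sstar) B := by
    intro θ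
    rw [phiSup_hull hScpt hSfib]
    exact hSB (θ, sSup (fib Sstar θ)) (fibSup_mem hScpt (hSfib θ))
  exact hgap ⟨hull Sstar, hVS, hltA, hltB⟩
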